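/- Let L ⊂ ℝ^n be a bimodular lattice of rank n, let A_1 ⊂ ℝ be the rank-1 lattice generated by a vector of square 2, and let U = (L × A_1) ∪ ((L' \ L) × (A_1' \ A_1)) ⊂ ℝ^{n+1} be the associated unimodular overlattice of L ⊕ A_1. Then U admits an orthonormal ℤ-basis (i.e. U is isomorphic as a lattice to the standard lattice I^{n+1} = ℤ^{n+1}) if and only if L is diagonal, i.e. L is isomorphic as a lattice to Δ_n = I^{n−1} ⊕ A_1. -/

import Mathlib

open scoped RealInnerProductSpace

noncomputable section

/-- The dual of a subset of Euclidean space: vectors pairing integrally with everything. -/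
def dualSet {n : ℕ} (Λ : Set (EuclideanSpace ℝ (Fin n))) : Set (EuclideanSpace ℝ (Fin n)) :=
  {x | ∀ v ∈ Λ, ∃ k : ℤ, ⟪x, v⟫ = (k : ℝ)}

/-- A (positive definite integral) lattice of full rank `n` in `ℝ^n`: an additive subgroup,
free abelian of rank `n` (it has a `ℤ`-basis indexed by `Fin n`), spanning `ℝ^n` over `ℝ`,
with all pairwise inner products integral. -/
def IsLattice {n : ℕ} (Λ : Set (EuclideanSpace ℝ (Fin n))) : Prop :=
  (0 ∈ Λ ∧ (∀ x ∈ Λ, ∀ y ∈ Λ, x + y ∈ Λ) ∧ (∀ x ∈ Λ, -x ∈ Λ)) ∧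
  (∃ b : Fin n → EuclideanSpace ℝ (Fin n),
      (∀ i, b i ∈ Λ) ∧ LinearIndependent ℤ b ∧
      ∀ x ∈ Λ, ∃ c : Fin n → ℤ, x = ∑ i, (c i : ℝ) • b i) ∧
  Submodule.span ℝ Λ = ⊤ ∧
  ∀ v ∈ Λ, ∀ w ∈ Λ, ∃ k : ℤ, ⟪v, w⟫ = (k : ℝ)

/-- A unimodular lattice: a lattice equal to its own dual. -/
def IsUnimodular {n : ℕ} (Λ : Set (EuclideanSpace ℝ (Fin n))) : Prop :=
  IsLattice Λ ∧ dualSet Λ = Λ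

/-- A bimodular lattice: a lattice of index 2 in its dual. -/
def IsBimodular {n : ℕ} (Λ : Set (EuclideanSpace ℝ (Fin n))) : Prop :=
  IsLattice Λ ∧
  ∃ w ∈ dualSet Λ \ Λ, ∀ x ∈ dualSet Λ, x ∈ Λ ∨ x - w ∈ Λ

/-- Characteristic covectors: elements `ξ` of the dual with `ξ·v ≡ v·v (mod 2)` for all `v ∈ Λ`. -/
def CharSet {n : ℕ} (Λ : Set (EuclideanSpace ℝ (Fin n))) : Set (EuclideanSpace ℝ (Fin n)) :=
  {ξ | ξ ∈ dualSet Λ ∧ ∀ v ∈ Λ, ∃ k : ℤ, ⟪ξ, v⟫ - ⟪v, v⟫ = 2 * (k : ℝ)}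

/-- `CharSign Λ ε` (for `ε = ±1`): characteristic covectors with `ξ·ξ ≡ n + ε (mod 8)`. -/
def CharSign {n : ℕ} (Λ : Set (EuclideanSpace ℝ (Fin n))) (ε : ℤ) :
    Set (EuclideanSpace ℝ (Fin n)) :=
  {ξ | ξ ∈ CharSet Λ ∧ ∃ k : ℤ, ⟪ξ, ξ⟫ = (n : ℝ) + (ε : ℝ) + 8 * (k : ℝ)}

/-- The defect `d(Λ) = min_{ξ ∈ Char(Λ)} (ξ·ξ − n)/4` of a full-rank lattice in `ℝ^n`. -/
def defect {n : ℕ} (Λ : Set (EuclideanSpace ℝ (Fin n))) : ℝ :=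
  sInf ((fun ξ => (⟪ξ, ξ⟫ - (n : ℝ)) / 4) '' CharSet Λ)

/-- The two defects `d_±(L) = min_{ξ ∈ Char_±(L)} (ξ·ξ − n)/4` of a bimodular lattice. -/
def defectSign {n : ℕ} (Λ : Set (EuclideanSpace ℝ (Fin n))) (ε : ℤ) : ℝ :=
  sInf ((fun ξ => (⟪ξ, ξ⟫ - (n : ℝ)) / 4) '' CharSign Λ ε)

/-- The juxtaposition `(x, y) ∈ ℝ^n × ℝ^m = ℝ^{n+m}`. -/
def pairE {n m : ℕ} (x : EuclideanSpace ℝ (Fin n)) (y : EuclideanSpace ℝ (Fin m)) :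
    EuclideanSpace ℝ (Fin (n + m)) :=
  (EuclideanSpace.equiv (Fin (n + m)) ℝ).symm
    (Fin.append (EuclideanSpace.equiv (Fin n) ℝ x) (EuclideanSpace.equiv (Fin m) ℝ y))

/-- The first component `ℝ^{n+m} → ℝ^n` of a covector. -/
def restFst {n m : ℕ} (ξ : EuclideanSpace ℝ (Fin (n + m))) : EuclideanSpace ℝ (Fin n) :=
  (EuclideanSpace.equiv (Fin n) ℝ).symm
    (fun i => EuclideanSpace.equiv (Fin (n + m)) ℝ ξ (Fin.castAdd m i))

/-- The second component `ℝ^{n+m} → ℝ^m` of a covector. -/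
def restSnd {n m : ℕ} (ξ : EuclideanSpace ℝ (Fin (n + m))) : EuclideanSpace ℝ (Fin m) :=
  (EuclideanSpace.equiv (Fin m) ℝ).symm
    (fun i => EuclideanSpace.equiv (Fin (n + m)) ℝ ξ (Fin.natAdd n i))

/-- The orthogonal direct sum `L ⊕ A ⊂ ℝ^{n+m}`, i.e. the subgroup `L × A`. -/
def prodSet {n m : ℕ} (L : Set (EuclideanSpace ℝ (Fin n))) (A : Set (EuclideanSpace ℝ (Fin m))) :
    Set (EuclideanSpace ℝ (Fin (n + m))) :=
  {z | ∃ x ∈ L, ∃ y ∈ A, z = pairE x y}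

/-- The overlattice `U_A = (L × A) ∪ ((L' \ L) × (A' \ A)) ⊂ ℝ^{n+m}`. -/
def overLattice {n m : ℕ} (L : Set (EuclideanSpace ℝ (Fin n)))
    (A : Set (EuclideanSpace ℝ (Fin m))) : Set (EuclideanSpace ℝ (Fin (n + m))) :=
  prodSet L A ∪ prodSet (dualSet L \ L) (dualSet A \ A)

/-- The standard lattice `I^n = ℤ^n ⊂ ℝ^n`. -/
def stdLattice (n : ℕ) : Set (EuclideanSpace ℝ (Fin n)) :=
  {x | ∀ i : Fin n, ∃ k : ℤ, x i = (k : ℝ)}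

/-- A lattice is diagonal if it admits a `ℤ`-basis with Gram matrix `diag(1, …, 1, 2)`,
i.e. it is isomorphic to `Δ_n = I^{n-1} ⊕ A_1`. -/
def IsDiagonal {n : ℕ} (Λ : Set (EuclideanSpace ℝ (Fin n))) : Prop :=
  ∃ b : Fin n → EuclideanSpace ℝ (Fin n),
    (∀ i, b i ∈ Λ) ∧ LinearIndependent ℤ b ∧
    (∀ x ∈ Λ, ∃ c : Fin n → ℤ, x = ∑ i, (c i : ℝ) • b i) ∧
    (∀ i j : Fin n, ⟪b i, b j⟫ =
      if i = j then (if (i : ℕ) = n - 1 then 2 else 1) else 0)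

/-- A lattice has an orthonormal `ℤ`-basis iff it is isomorphic to the standard lattice `I^n`. -/
def HasOrthonormalZBasis {n : ℕ} (Λ : Set (EuclideanSpace ℝ (Fin n))) : Prop :=
  ∃ b : Fin n → EuclideanSpace ℝ (Fin n),
    (∀ i, b i ∈ Λ) ∧ LinearIndependent ℤ b ∧
    (∀ x ∈ Λ, ∃ c : Fin n → ℤ, x = ∑ i, (c i : ℝ) • b i) ∧
    (∀ i j : Fin n, ⟪b i, b j⟫ = if i = j then 1 else 0)


-- ==================== auxiliary lemmas ====================

private abbrev EE (k : ℕ) := EuclideanSpace ℝ (Fin k)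

lemma pairE_castAdd {n m : ℕ} (x : EE n) (y : EE m) (i : Fin n) :
    pairE x y (Fin.castAdd m i) = x i := by
  simp [pairE, Fin.append_left, EuclideanSpace.equiv]

lemma pairE_natAdd {n m : ℕ} (x : EE n) (y : EE m) (i : Fin m) :
    pairE x y (Fin.natAdd n i) = y i := by
  simp [pairE, Fin.append_right, EuclideanSpace.equiv]

lemma restFst_apply {n m : ℕ} (z : EE (n+m)) (i : Fin n) : restFst z i = z (Fin.castAdd m i) := rfl
lemma restSnd_apply {n m : ℕ} (z : EE (n+m)) (i : Fin m) : restSnd z i = z (Fin.natAdd n i) := rfl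

lemma inner_eq {k : ℕ} (x y : EE k) : ⟪x,y⟫ = ∑ i, x i * y i := by
  simp [PiLp.inner_apply, RCLike.inner_apply, conj_trivial]
  exact Finset.sum_congr rfl fun i _ => mul_comm _ _

lemma pairE_inner {n m : ℕ} (x x' : EE n) (y y' : EE m) :
    ⟪pairE x y, pairE x' y'⟫ = ⟪x,x'⟫ + ⟪y,y'⟫ := by
  rw [inner_eq, inner_eq, inner_eq, Fin.sum_univ_add]
  simp [pairE_castAdd, pairE_natAdd]

lemma pairE_decomp {n m : ℕ} (z : EE (n+m)) : z = pairE (restFst z) (restSnd z) := by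
  ext i
  cases i using Fin.addCases with
  | left i => rw [pairE_castAdd]; rfl
  | right i => rw [pairE_natAdd]; rfl

lemma restFst_pairE {n m : ℕ} (x : EE n) (y : EE m) : restFst (pairE x y) = x := by
  ext i; rw [restFst_apply, pairE_castAdd]

lemma restSnd_pairE {n m : ℕ} (x : EE n) (y : EE m) : restSnd (pairE x y) = y := by
  ext i; rw [restSnd_apply, pairE_natAdd]

lemma pairE_add {n m : ℕ} (x x' : EE n) (y y' : EE m) :
    pairE x y + pairE x' y' = pairE (x + x') (y + y') := by
  ext i
  cases i using Fin.addCases with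
  | left i => rw [pairE_castAdd, PiLp.add_apply, pairE_castAdd, pairE_castAdd]; rfl
  | right i => rw [pairE_natAdd, PiLp.add_apply, pairE_natAdd, pairE_natAdd]; rfl

lemma pairE_neg {n m : ℕ} (x : EE n) (y : EE m) :
    -pairE x y = pairE (-x) (-y) := by
  ext i
  cases i using Fin.addCases with
  | left i => rw [pairE_castAdd, PiLp.neg_apply, pairE_castAdd]; rfl
  | right i => rw [pairE_natAdd, PiLp.neg_apply, pairE_natAdd]; rfl

lemma restFst_sum {n m : ℕ} {ι : Type*} (s : Finset ι) (c : ι → ℝ) (v : ι → EE (n+m)) :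
    restFst (∑ i ∈ s, c i • v i) = ∑ i ∈ s, c i • restFst (v i) := by
  ext j
  rw [restFst_apply]
  classical
  induction s using Finset.induction with
  | empty => simp
  | insert a s h ih =>
      rw [Finset.sum_insert h, Finset.sum_insert h, PiLp.add_apply, PiLp.add_apply,
        PiLp.smul_apply, PiLp.smul_apply, ih, restFst_apply]

section A1aux
variable (r : EE 1)

lemma recon (hr : ⟪r, r⟫ = 2) (y : EE 1) : y = (⟪y,r⟫/2) • r := by
  have h2 : r 0 * r 0 = 2 := by rw [inner_eq] at hr; simpa using hr
  ext i
  have h0 : i = 0 := Subsingleton.elim _ _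
  subst h0
  have : ⟪y,r⟫ = y 0 * r 0 := by rw [inner_eq]; simp
  rw [PiLp.smul_apply, this, smul_eq_mul]
  have hr0 : r 0 ≠ 0 := by intro h; rw [h] at h2; simp at h2
  field_simp
  rw [sq, h2]

variable (hr : ⟪r, r⟫ = 2) (A₁ : Set (EE 1)) (hA₁ : A₁ = {x | ∃ k : ℤ, x = (k : ℝ) • r})

include hr hA₁ in
lemma mem_A₁_iff (y : EE 1) : y ∈ A₁ ↔ ∃ k : ℤ, ⟪y, r⟫ = 2 * k := by
  subst hA₁
  constructor
  · rintro ⟨k, rfl⟩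
    exact ⟨k, by rw [real_inner_smul_left, hr]; ring⟩
  · rintro ⟨k, hk⟩
    exact ⟨k, by rw [recon r hr y, hk]; norm_num⟩

include hr hA₁ in
lemma mem_dual_A₁_iff (y : EE 1) : y ∈ dualSet A₁ ↔ ∃ k : ℤ, ⟪y, r⟫ = k := by
  constructor
  · intro h
    exact h r (by rw [hA₁]; exact ⟨1, by norm_num⟩)
  · rintro ⟨k, hk⟩ v hv
    rw [hA₁] at hv
    obtain ⟨k', rfl⟩ := hv
    exact ⟨k' * k, by rw [real_inner_smul_right, hk]; push_cast; ring⟩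

include hr hA₁ in
lemma mem_diff_A₁_iff (y : EE 1) :
    y ∈ dualSet A₁ \ A₁ ↔ ∃ k : ℤ, ⟪y, r⟫ = 2 * k + 1 := by
  constructor
  · rintro ⟨hd, hn⟩
    obtain ⟨k, hk⟩ := (mem_dual_A₁_iff r hr A₁ hA₁ y).1 hd
    rcases Int.even_or_odd k with ⟨k', rfl⟩ | ⟨k', rfl⟩
    · exact absurd ((mem_A₁_iff r hr A₁ hA₁ y).2 ⟨k', by rw [hk]; push_cast; ring⟩) hn
    · exact ⟨k', by rw [hk]; push_cast; ring⟩
  · rintro ⟨k, hk⟩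
    refine ⟨(mem_dual_A₁_iff r hr A₁ hA₁ y).2 ⟨2*k+1, by rw [hk]; push_cast; ring⟩, ?_⟩
    intro hy
    obtain ⟨k', hk'⟩ := (mem_A₁_iff r hr A₁ hA₁ y).1 hy
    rw [hk] at hk'
    have : 2 * k + 1 = 2 * k' := by exact_mod_cast hk'
    omega
end A1aux

section Lataux
variable {n : ℕ} {L : Set (EE n)}
  (hgrp : (0 ∈ L ∧ (∀ x ∈ L, ∀ y ∈ L, x + y ∈ L) ∧ (∀ x ∈ L, -x ∈ L)))

include hgrp in
lemma L_sub (x y : EE n) (hx : x ∈ L) (hy : y ∈ L) : x - y ∈ L := by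
  rw [sub_eq_add_neg]; exact hgrp.2.1 x hx _ (hgrp.2.2 y hy)

variable (w₀ : EE n) (hw₀ : w₀ ∈ dualSet L \ L)
  (hidx : ∀ x ∈ dualSet L, x ∈ L ∨ x - w₀ ∈ L)

include hgrp hw₀ hidx in
lemma diff_mem_L {x y : EE n} (hx : x ∈ dualSet L \ L) (hy : y ∈ dualSet L \ L) :
    x - y ∈ L := by
  have h1 : x - w₀ ∈ L := (hidx x hx.1).resolve_left hx.2
  have h2 : y - w₀ ∈ L := (hidx y hy.1).resolve_left hy.2
  have := L_sub hgrp _ _ h1 h2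
  simpa using this

include hgrp hw₀ hidx in
lemma add_mem_L {x y : EE n} (hx : x ∈ dualSet L \ L) (hy : y ∈ dualSet L \ L) :
    x + y ∈ L := by
  have h1 : x - w₀ ∈ L := (hidx x hx.1).resolve_left hx.2
  have h2 : y - w₀ ∈ L := (hidx y hy.1).resolve_left hy.2
  have h3 : w₀ + w₀ ∈ L := by
    rcases hidx (w₀ + w₀) (fun v hv => by
      obtain ⟨k, hk⟩ := hw₀.1 v hv
      exact ⟨k + k, by rw [inner_add_left, hk]; push_cast; ring⟩) with h | h
    · exact h
    · exact absurd (by simpa using h) hw₀.2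
  have := hgrp.2.1 _ (hgrp.2.1 _ h1 _ h2) _ h3
  have e : x - w₀ + (y - w₀) + (w₀ + w₀) = x + y := by abel
  rwa [e] at this
end Lataux

lemma li_of_gram {N k : ℕ} (v : Fin k → EE N) (d : Fin k → ℝ)
    (hd : ∀ i, d i ≠ 0) (h : ∀ i j, ⟪v i, v j⟫ = if i = j then d i else 0) :
    LinearIndependent ℤ v := by
  rw [Fintype.linearIndependent_iff]
  intro g hg i
  have : ⟪∑ j, g j • v j, v i⟫ = (0:ℝ) := by rw [hg, inner_zero_left]
  rw [sum_inner] at this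
  simp only [← Int.cast_smul_eq_zsmul ℝ, real_inner_smul_left, h] at this
  rw [Finset.sum_eq_single i (fun b _ hb => by simp [hb]) (by simp)] at this
  simp only [if_pos rfl] at this
  rcases mul_eq_zero.1 this with h' | h'
  · exact_mod_cast h'
  · exact absurd h' (hd i)

lemma coeff_eq {N k : ℕ} (v : Fin k → EE N) (d : Fin k → ℝ)
    (h : ∀ i j, ⟪v i, v j⟫ = if i = j then d i else 0) (c : Fin k → ℝ) (j : Fin k) :
    ⟪v j, ∑ i, c i • v i⟫ = c j * d j := by
  rw [inner_sum]
  simp only [real_inner_smul_right, h]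
  rw [Finset.sum_eq_single j (fun b _ hb => by simp [Ne.symm hb]) (by simp)]
  simp

lemma ortho_expand {N : ℕ} (v : Fin N → EE N)
    (h : ∀ i j, ⟪v i, v j⟫ = if i = j then 1 else 0) (z : EE N) :
    z = ∑ i, ⟪v i, z⟫ • v i := by
  have horth : Orthonormal ℝ v := orthonormal_iff_ite.2 h
  rcases Nat.eq_zero_or_pos N with h0 | hpos
  · subst h0; exact Subsingleton.elim _ _
  have : Nonempty (Fin N) := ⟨⟨0, hpos⟩⟩
  have hcard : Fintype.card (Fin N) = Module.finrank ℝ (EE N) := by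
    simp [finrank_euclideanSpace_fin]
  have hspan : Submodule.span ℝ (Set.range v) = ⊤ :=
    LinearIndependent.span_eq_top_of_card_eq_finrank horth.linearIndependent hcard
  let b : OrthonormalBasis (Fin N) ℝ (EE N) := OrthonormalBasis.mk horth hspan.ge
  have hb : ∀ i, b i = v i := fun i => by simp [b, OrthonormalBasis.coe_mk]
  conv_lhs => rw [← b.sum_repr z]
  refine Finset.sum_congr rfl fun i _ => ?_
  rw [b.repr_apply_apply, hb]

lemma sq2 {N : ℕ} (c : Fin N → ℤ) (h : ∑ i, c i ^ 2 = 2) :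
    ∃ i₀ i₁ : Fin N, i₀ ≠ i₁ ∧ c i₀ ^ 2 = 1 ∧ c i₁ ^ 2 = 1 ∧
      ∀ j, j ≠ i₀ → j ≠ i₁ → c j = 0 := by
  classical
  set s : Finset (Fin N) := Finset.univ.filter (fun i => c i ≠ 0) with hs
  have hsum : ∑ i ∈ s, c i ^ 2 = 2 := by
    rw [← h]
    exact Finset.sum_subset (Finset.subset_univ s) (fun i _ hi => by
      have hc : c i = 0 := by
        by_contra hne
        exact hi (Finset.mem_filter.2 ⟨Finset.mem_univ i, hne⟩)
      simp [hc])
  have hone : ∀ i ∈ s, 1 ≤ c i ^ 2 := by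
    intro i hi
    have : c i ≠ 0 := (Finset.mem_filter.1 hi).2
    rcases this.lt_or_gt with h' | h' <;> nlinarith
  have hcard2 : s.card ≤ 2 := by
    by_contra hc
    push_neg at hc
    have : (s.card : ℤ) ≤ ∑ i ∈ s, c i ^ 2 := by
      calc (s.card : ℤ) = ∑ _i ∈ s, 1 := by simp
      _ ≤ _ := Finset.sum_le_sum hone
    omega
  interval_cases hsc : s.card
  · rw [Finset.card_eq_zero] at hsc; rw [hsc] at hsum; simp at hsum
  · obtain ⟨i, hi⟩ := Finset.card_eq_one.1 hsc
    rw [hi, Finset.sum_singleton] at hsum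
    have h1 : c i ≠ 0 := by
      have : i ∈ s := by rw [hi]; exact Finset.mem_singleton_self i
      exact (Finset.mem_filter.1 this).2
    have habs : |c i| = 1 ∨ 2 ≤ |c i| := by
      have := Int.one_le_abs (by simpa using h1 : c i ≠ 0)
      omega
    rcases habs with habs | habs
    · rw [← sq_abs, habs] at hsum; norm_num at hsum
    · nlinarith [sq_abs (c i)]
  · obtain ⟨i₀, i₁, hne, hset⟩ := Finset.card_eq_two.1 hsc
    rw [hset, Finset.sum_pair hne] at hsum
    have h0 : 1 ≤ c i₀ ^ 2 := hone i₀ (by rw [hset]; simp)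
    have h1 : 1 ≤ c i₁ ^ 2 := hone i₁ (by rw [hset]; simp)
    refine ⟨i₀, i₁, hne, by omega, by omega, fun j hj0 hj1 => ?_⟩
    by_contra hj
    have : j ∈ s := Finset.mem_filter.2 ⟨Finset.mem_univ j, hj⟩
    rw [hset] at this
    simp [hj0, hj1] at this

/-- for a bimodular lattice `L ⊂ ℝ^n` and `A₁ ⊂ ℝ` the rank-1 lattice generated by
a vector of square 2, the unimodular overlattice `U = (L × A₁) ∪ ((L' \ L) × (A₁' \ A₁))` admits
an orthonormal `ℤ`-basis (i.e. `U ≅ I^{n+1}`) iff `L` is diagonal (i.e. `L ≅ Δ_n = I^{n−1} ⊕ A₁`). -/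
theorem stmt6 {n : ℕ} (L : Set (EuclideanSpace ℝ (Fin n))) (hL : IsBimodular L)
    (r : EuclideanSpace ℝ (Fin 1)) (hr : ⟪r, r⟫ = 2)
    (A₁ : Set (EuclideanSpace ℝ (Fin 1)))
    (hA₁ : A₁ = {x | ∃ k : ℤ, x = (k : ℝ) • r}) :
    HasOrthonormalZBasis (overLattice L A₁) ↔ IsDiagonal L := by
  obtain ⟨⟨hgrp, hbasis, hspan, hint⟩, w₀, hw₀, hidx⟩ := hL
  -- n = m + 1
  obtain ⟨m, rfl⟩ : ∃ m, n = m + 1 := by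
    cases n with
    | zero =>
        exfalso
        have h0 : w₀ = 0 := by ext i; exact i.elim0
        exact hw₀.2 (h0 ▸ hgrp.1)
    | succ m => exact ⟨m, rfl⟩
  have hzeroA : (0 : EuclideanSpace ℝ (Fin 1)) ∈ A₁ := by
    rw [hA₁]; exact ⟨0, by simp⟩
  have hLsubD : ∀ v ∈ L, v ∈ dualSet L := fun v hv w hw => hint v hv w hw
  constructor
  · -- orthonormal basis of U → L diagonal
    rintro ⟨e, heU, _heli, hegen, hegram⟩
    -- U is closed under negation and addition
    have hDadd : ∀ x ∈ dualSet L, ∀ x' ∈ dualSet L, x + x' ∈ dualSet L := by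
      intro x hx x' hx' v hv
      obtain ⟨k, hk⟩ := hx v hv
      obtain ⟨k', hk'⟩ := hx' v hv
      exact ⟨k + k', by rw [inner_add_left, hk, hk']; push_cast; ring⟩
    have hUneg : ∀ z ∈ overLattice L A₁, -z ∈ overLattice L A₁ := by
      rintro z (⟨x, hx, y, hy, rfl⟩ | ⟨x, hx, y, hy, rfl⟩)
      · refine Or.inl ⟨-x, hgrp.2.2 x hx, -y, ?_, by rw [pairE_neg]⟩
        obtain ⟨k, hk⟩ := (mem_A₁_iff r hr A₁ hA₁ y).1 hy
        exact (mem_A₁_iff r hr A₁ hA₁ (-y)).2 ⟨-k, by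
          rw [inner_neg_left, hk]; push_cast; ring⟩
      · refine Or.inr ⟨-x, ⟨?_, ?_⟩, -y, ?_, by rw [pairE_neg]⟩
        · intro v hv
          obtain ⟨k, hk⟩ := hx.1 v hv
          exact ⟨-k, by rw [inner_neg_left, hk]; push_cast; ring⟩
        · intro hmem
          exact hx.2 (by simpa using hgrp.2.2 _ hmem)
        · obtain ⟨k, hk⟩ := (mem_diff_A₁_iff r hr A₁ hA₁ y).1 hy
          exact (mem_diff_A₁_iff r hr A₁ hA₁ (-y)).2 ⟨-k - 1, by
            rw [inner_neg_left, hk]; push_cast; ring⟩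
    have hUadd : ∀ z ∈ overLattice L A₁, ∀ z' ∈ overLattice L A₁,
        z + z' ∈ overLattice L A₁ := by
      rintro z (⟨x, hx, y, hy, rfl⟩ | ⟨x, hx, y, hy, rfl⟩) z'
        (⟨x', hx', y', hy', rfl⟩ | ⟨x', hx', y', hy', rfl⟩)
      · refine Or.inl ⟨x + x', hgrp.2.1 x hx x' hx', y + y', ?_, by rw [pairE_add]⟩
        obtain ⟨k, hk⟩ := (mem_A₁_iff r hr A₁ hA₁ y).1 hy
        obtain ⟨k', hk'⟩ := (mem_A₁_iff r hr A₁ hA₁ y').1 hy'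
        exact (mem_A₁_iff r hr A₁ hA₁ _).2 ⟨k + k', by
          rw [inner_add_left, hk, hk']; push_cast; ring⟩
      · refine Or.inr ⟨x + x', ⟨hDadd x (hLsubD x hx) x' hx'.1, ?_⟩, y + y', ?_,
          by rw [pairE_add]⟩
        · intro hmem
          exact hx'.2 (by simpa using L_sub hgrp _ _ hmem hx)
        · obtain ⟨k, hk⟩ := (mem_A₁_iff r hr A₁ hA₁ y).1 hy
          obtain ⟨k', hk'⟩ := (mem_diff_A₁_iff r hr A₁ hA₁ y').1 hy'
          exact (mem_diff_A₁_iff r hr A₁ hA₁ _).2 ⟨k + k', by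
            rw [inner_add_left, hk, hk']; push_cast; ring⟩
      · refine Or.inr ⟨x + x', ⟨hDadd x hx.1 x' (hLsubD x' hx'), ?_⟩, y + y', ?_,
          by rw [pairE_add]⟩
        · intro hmem
          exact hx.2 (by simpa using L_sub hgrp _ _ hmem hx')
        · obtain ⟨k, hk⟩ := (mem_diff_A₁_iff r hr A₁ hA₁ y).1 hy
          obtain ⟨k', hk'⟩ := (mem_A₁_iff r hr A₁ hA₁ y').1 hy'
          exact (mem_diff_A₁_iff r hr A₁ hA₁ _).2 ⟨k + k', by
            rw [inner_add_left, hk, hk']; push_cast; ring⟩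
      · refine Or.inl ⟨x + x', add_mem_L hgrp w₀ hw₀ hidx hx hx', y + y', ?_,
          by rw [pairE_add]⟩
        obtain ⟨k, hk⟩ := (mem_diff_A₁_iff r hr A₁ hA₁ y).1 hy
        obtain ⟨k', hk'⟩ := (mem_diff_A₁_iff r hr A₁ hA₁ y').1 hy'
        exact (mem_A₁_iff r hr A₁ hA₁ _).2 ⟨k + k' + 1, by
          rw [inner_add_left, hk, hk']; push_cast; ring⟩
    -- the vector w = (0, r)
    set w : EuclideanSpace ℝ (Fin (m+1+1)) := pairE 0 r with hwdef
    have hwU : w ∈ overLattice L A₁ := by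
      refine Or.inl ⟨0, hgrp.1, r, ?_, rfl⟩
      rw [hA₁]; exact ⟨1, by simp⟩
    obtain ⟨c, hc⟩ := hegen w hwU
    have hew : ∀ j, ⟪e j, w⟫ = (c j : ℝ) := by
      intro j
      rw [hc, coeff_eq e (fun _ => 1) hegram]
      simp
    have hww : ⟪w, w⟫ = 2 := by
      rw [hwdef, pairE_inner, hr, inner_zero_left]; ring
    have hsqR : ∑ i, ((c i : ℝ)) * ((c i : ℝ)) = 2 := by
      have h1 : ⟪w, w⟫ = ∑ i, (c i : ℝ) * ⟪e i, w⟫ := by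
        nth_rewrite 1 [hc]
        rw [sum_inner]
        exact Finset.sum_congr rfl fun i _ => real_inner_smul_left _ _ _
      rw [show (2:ℝ) = ⟪w,w⟫ from hww.symm, h1]
      exact Finset.sum_congr rfl fun i _ => by rw [hew]
    have hsqZ : ∑ i, c i ^ 2 = 2 := by
      have : ((∑ i, c i ^ 2 : ℤ) : ℝ) = 2 := by
        push_cast
        rw [← hsqR]
        exact Finset.sum_congr rfl fun i _ => by ring
      exact_mod_cast this
    obtain ⟨i₀, i₁, hne, h0sq, h1sq, hzero⟩ := sq2 c hsqZ
    -- members of U orthogonal to w come from L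
    have hperp : ∀ z ∈ overLattice L A₁, ⟪z, w⟫ = 0 → ∃ x ∈ L, z = pairE x 0 := by
      rintro z (⟨x, hx, y, hy, rfl⟩ | ⟨x, hx, y, hy, rfl⟩) hz
      · rw [hwdef, pairE_inner, inner_zero_right] at hz
        obtain ⟨k, hk⟩ := (mem_A₁_iff r hr A₁ hA₁ y).1 hy
        have hk0 : (2 : ℤ) * k = 0 := by
          exact_mod_cast (hk ▸ (by simpa using hz) : (2:ℝ) * k = 0)
        have hy0 : y = 0 := by
          rw [recon r hr y, hk]
          have : k = 0 := by omega
          rw [this]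
          simp
        exact ⟨x, hx, by rw [hy0]⟩
      · exfalso
        rw [hwdef, pairE_inner, inner_zero_right] at hz
        obtain ⟨k, hk⟩ := (mem_diff_A₁_iff r hr A₁ hA₁ y).1 hy
        have : (2 : ℤ) * k + 1 = 0 := by
          exact_mod_cast (hk ▸ (by simpa using hz) : (2:ℝ) * k + 1 = 0)
        omega
    -- the permutation σ
    set A : Fin (m+1+1) := Fin.castSucc (Fin.last m) with hA
    set B : Fin (m+1+1) := Fin.last (m+1) with hB
    have hABne : A ≠ B := by simp [hA, hB, Fin.ext_iff]
    set σ₁ : Equiv.Perm (Fin (m+1+1)) := Equiv.swap B i₁ with hσ₁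
    set i₀' : Fin (m+1+1) := σ₁ i₀ with hi₀'
    have hi₀'B : i₀' ≠ B := by
      intro h
      apply hne
      have h2 : σ₁ i₀' = σ₁ B := by rw [h]
      rw [hi₀', Equiv.swap_apply_self, hσ₁, Equiv.swap_apply_left] at h2
      exact h2
    set σ₂ : Equiv.Perm (Fin (m+1+1)) := Equiv.swap A i₀' with hσ₂
    set σ : Equiv.Perm (Fin (m+1+1)) := σ₂.trans σ₁ with hσ
    have hσA : σ A = i₀ := by
      rw [hσ, Equiv.trans_apply, hσ₂, Equiv.swap_apply_left, hi₀',
        Equiv.swap_apply_self]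
    have hσB : σ B = i₁ := by
      rw [hσ, Equiv.trans_apply, hσ₂,
        Equiv.swap_apply_of_ne_of_ne (Ne.symm hABne) (Ne.symm hi₀'B), hσ₁,
        Equiv.swap_apply_left]
    have hσother : ∀ j : Fin (m+1+1), j ≠ A → j ≠ B → c (σ j) = 0 := by
      intro j hja hjb
      refine hzero _ (fun h => hja (σ.injective (h.trans hσA.symm)))
        (fun h => hjb (σ.injective (h.trans hσB.symm)))
    -- the sign units
    have hu0 : c i₀ = 1 ∨ c i₀ = -1 :=
      Int.isUnit_iff.1 (IsUnit.of_mul_eq_one _ (by rw [← sq]; exact h0sq))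
    have hu1 : c i₁ = 1 ∨ c i₁ = -1 :=
      Int.isUnit_iff.1 (IsUnit.of_mul_eq_one _ (by rw [← sq]; exact h1sq))
    -- the vector g
    set g : EuclideanSpace ℝ (Fin (m+1+1)) :=
      ((c i₀ : ℝ)) • e i₀ - ((c i₁ : ℝ)) • e i₁ with hg
    have hgU : g ∈ overLattice L A₁ := by
      have h1 : ((c i₀ : ℝ)) • e i₀ ∈ overLattice L A₁ := by
        rcases hu0 with h | h <;> rw [h] <;> push_cast <;> simp
        · exact heU i₀
        · exact hUneg _ (heU i₀)
      have h2 : -(((c i₁ : ℝ)) • e i₁) ∈ overLattice L A₁ := by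
        rcases hu1 with h | h <;> rw [h] <;> push_cast <;> simp
        · exact hUneg _ (heU i₁)
        · exact heU i₁
      have := hUadd _ h1 _ h2
      rwa [← sub_eq_add_neg] at this
    have hgw : ⟪g, w⟫ = 0 := by
      rw [hg, inner_sub_left, real_inner_smul_left, real_inner_smul_left, hew, hew]
      have e0 : ((c i₀ : ℝ)) * (c i₀ : ℝ) = 1 := by exact_mod_cast (by rw [← sq]; exact h0sq : c i₀ * c i₀ = 1)
      have e1 : ((c i₁ : ℝ)) * (c i₁ : ℝ) = 1 := by exact_mod_cast (by rw [← sq]; exact h1sq : c i₁ * c i₁ = 1)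
      rw [e0, e1]; ring
    have hgg : ⟪g, g⟫ = 2 := by
      have e0 : ((c i₀ : ℝ)) * (c i₀ : ℝ) = 1 := by exact_mod_cast (by rw [← sq]; exact h0sq : c i₀ * c i₀ = 1)
      have e1 : ((c i₁ : ℝ)) * (c i₁ : ℝ) = 1 := by exact_mod_cast (by rw [← sq]; exact h1sq : c i₁ * c i₁ = 1)
      have ha : ⟪((c i₀ : ℝ)) • e i₀, ((c i₀ : ℝ)) • e i₀⟫ = 1 := by
        rw [real_inner_smul_left, real_inner_smul_right, hegram]; simp [e0]
      have hb2 : ⟪((c i₁ : ℝ)) • e i₁, ((c i₁ : ℝ)) • e i₁⟫ = 1 := by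
        rw [real_inner_smul_left, real_inner_smul_right, hegram]; simp [e1]
      have hab : ⟪((c i₀ : ℝ)) • e i₀, ((c i₁ : ℝ)) • e i₁⟫ = 0 := by
        rw [real_inner_smul_left, real_inner_smul_right, hegram]; simp [hne]
      have hba : ⟪((c i₁ : ℝ)) • e i₁, ((c i₀ : ℝ)) • e i₀⟫ = 0 := by
        rw [real_inner_smul_left, real_inner_smul_right, hegram]; simp [Ne.symm hne]
      rw [hg, inner_sub_left, inner_sub_right, inner_sub_right, ha, hb2, hab, hba]
      norm_num
    -- the candidate basis vectors in U
    set v : Fin (m+1) → EuclideanSpace ℝ (Fin (m+1+1)) :=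
      fun k => if k = Fin.last m then g else e (σ (Fin.castSucc k)) with hv
    have hcsA : ∀ k : Fin (m+1), k ≠ Fin.last m → Fin.castSucc k ≠ A := by
      intro k hk h
      exact hk (Fin.castSucc_injective _ (h.trans hA))
    have hcsB : ∀ k : Fin (m+1), Fin.castSucc k ≠ B := by
      intro k h
      have := k.isLt
      rw [hB, Fin.ext_iff] at h
      simp at h
      omega
    have hvU : ∀ k, v k ∈ overLattice L A₁ := by
      intro k
      simp only [hv]
      by_cases hk : k = Fin.last m
      · rw [if_pos hk]; exact hgU
      · rw [if_neg hk]; exact heU _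
    have hvperp : ∀ k, ⟪v k, w⟫ = 0 := by
      intro k
      simp only [hv]
      by_cases hk : k = Fin.last m
      · rw [if_pos hk]; exact hgw
      · rw [if_neg hk, hew, hσother _ (hcsA k hk) (hcsB k)]
        simp
    have hvx : ∀ k, ∃ x ∈ L, v k = pairE x 0 := fun k =>
      hperp _ (hvU k) (hvperp k)
    choose bx hbxL hbx using hvx
    -- Gram matrix of v (and hence of bx)
    have hgey : ∀ j : Fin (m+1+1), j ≠ A → j ≠ B → ⟪g, e (σ j)⟫ = 0 := by
      intro j hja hjb
      rw [hg, inner_sub_left, real_inner_smul_left, real_inner_smul_left,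
        hegram, hegram,
        if_neg (show ¬ (i₀ = σ j) from fun h => hja (σ.injective ((h.symm).trans hσA.symm))),
        if_neg (show ¬ (i₁ = σ j) from fun h => hjb (σ.injective ((h.symm).trans hσB.symm)))]
      ring
    have hvgram : ∀ k l : Fin (m+1), ⟪v k, v l⟫ =
        if k = l then (if (k : ℕ) = m then (2:ℝ) else 1) else 0 := by
      intro k l
      simp only [hv]
      by_cases hk : k = Fin.last m <;> by_cases hl : l = Fin.last m
      · subst hk; subst hl
        simp only [if_pos rfl]
        simp only [↓reduceIte]; rw [hgg]; simp
      · rw [if_pos hk, if_neg hl, if_neg (by rw [hk]; exact fun h => hl h.symm)]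
        exact hgey _ (hcsA l hl) (hcsB l)
      · rw [if_neg hk, if_pos hl, if_neg (by rw [hl]; exact hk)]
        rw [real_inner_comm]
        exact hgey _ (hcsA k hk) (hcsB k)
      · rw [if_neg hk, if_neg hl, hegram]
        have hinj : σ (Fin.castSucc k) = σ (Fin.castSucc l) ↔ k = l := by
          constructor
          · intro h
            exact Fin.castSucc_injective _ (σ.injective h)
          · intro h; rw [h]
        by_cases hkl : k = l
        · rw [if_pos (hinj.2 hkl), if_pos hkl,
            if_neg (by have := k.isLt; intro h; rw [Fin.ext_iff] at hk; simp at hk; omega)]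
        · rw [if_neg (fun h => hkl (hinj.1 h)), if_neg hkl]
    have hbxgram : ∀ k l : Fin (m+1), ⟪bx k, bx l⟫ =
        if k = l then (if (k : ℕ) = m then (2:ℝ) else 1) else 0 := by
      intro k l
      have h1 : ⟪v k, v l⟫ = ⟪bx k, bx l⟫ := by
        rw [hbx k, hbx l, pairE_inner, inner_zero_left, add_zero]
      rw [← h1, hvgram]
    refine ⟨bx, hbxL, ?_, ?_, ?_⟩
    · exact li_of_gram bx (fun k => if (k : ℕ) = m then (2:ℝ) else 1)
        (fun k => by by_cases h : (k : ℕ) = m <;> simp [h]) hbxgram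
    · -- generation
      intro x hx
      have hzU : pairE x 0 ∈ overLattice L A₁ := Or.inl ⟨x, hx, 0, hzeroA, rfl⟩
      obtain ⟨d, hd⟩ := hegen _ hzU
      have hperp0 : ⟪pairE x (0 : EuclideanSpace ℝ (Fin 1)), w⟫ = 0 := by
        rw [hwdef, pairE_inner, inner_zero_right, inner_zero_left]; ring
      have hconR : ∑ j, (d j : ℝ) * (c j : ℝ) = 0 := by
        rw [← hperp0]
        conv_rhs => rw [hd]
        rw [sum_inner]
        exact (Finset.sum_congr rfl fun j _ => by
          rw [real_inner_smul_left, hew]).symm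
      have hconZ : ∑ j, d j * c j = 0 := by
        have : ((∑ j, d j * c j : ℤ) : ℝ) = 0 := by push_cast; rw [← hconR]
        exact_mod_cast this
      have hpair : d i₀ * c i₀ + d i₁ * c i₁ = 0 := by
        have h2 : ∑ j ∈ ({i₀, i₁} : Finset (Fin (m+1+1))), d j * c j = ∑ j, d j * c j :=
          Finset.sum_subset (Finset.subset_univ _) (fun j _ hj => by
            rw [hzero j (fun h => hj (by rw [h]; simp)) (fun h => hj (by rw [h]; simp))]
            ring)
        rw [Finset.sum_pair hne] at h2
        rw [h2, hconZ]
      set t : ℤ := c i₀ * d i₀ with ht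
      have hta : c i₀ * t = d i₀ := by
        rw [ht]
        linear_combination (d i₀) * h0sq
      have htb : c i₁ * t = -d i₁ := by
        rw [ht]
        linear_combination c i₁ * hpair - d i₁ * h1sq
      set cc : Fin (m+1) → ℤ :=
        fun k => if k = Fin.last m then t else d (σ (Fin.castSucc k)) with hccdef
      have h1Z : t * c i₀ = d i₀ := by rw [mul_comm]; exact hta
      have h2Z : t * c i₁ = -d i₁ := by rw [mul_comm]; exact htb
      have h1R : (t:ℝ) * (c i₀ : ℝ) = (d i₀ : ℝ) := by exact_mod_cast h1Z
      have h2R : (t:ℝ) * (c i₁ : ℝ) = -(d i₁ : ℝ) := by exact_mod_cast h2Z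
      have hterm : (t:ℝ) • g = (d i₀ : ℝ) • e i₀ + (d i₁ : ℝ) • e i₁ := by
        rw [hg, smul_sub, smul_smul, smul_smul, h1R, h2R, neg_smul, sub_neg_eq_add]
      have key : pairE x (0 : EuclideanSpace ℝ (Fin 1)) = ∑ k, (cc k : ℝ) • v k := by
        rw [hd]
        rw [← Equiv.sum_comp σ (fun j => (d j : ℝ) • e j)]
        rw [Fin.sum_univ_castSucc (f := fun j : Fin (m+1+1) => (d (σ j) : ℝ) • e (σ j))]
        rw [Fin.sum_univ_castSucc
          (f := fun j : Fin (m+1) => (d (σ (Fin.castSucc j)) : ℝ) • e (σ (Fin.castSucc j)))]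
        rw [Fin.sum_univ_castSucc (f := fun k : Fin (m+1) => (cc k : ℝ) • v k)]
        have hccl : cc (Fin.last m) = t := by simp [hccdef]
        have hvl : v (Fin.last m) = g := by simp [hv]
        have hsum : ∑ k' : Fin m, (cc (Fin.castSucc k') : ℝ) • v (Fin.castSucc k') =
            ∑ k' : Fin m, (d (σ (Fin.castSucc (Fin.castSucc k'))) : ℝ) •
              e (σ (Fin.castSucc (Fin.castSucc k'))) := by
          refine Finset.sum_congr rfl fun k' _ => ?_
          have hne' : Fin.castSucc k' ≠ Fin.last m := by
            have := k'.isLt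
            simp [Fin.ext_iff]
            omega
          simp only [hccdef, hv]
          rw [if_neg hne', if_neg hne']
        rw [hccl, hvl, hterm, hsum, ← hA, ← hB, hσA, hσB]
        abel
      have : x = restFst (∑ k, (cc k : ℝ) • v k) := by
        rw [← key, restFst_pairE]
      rw [restFst_sum] at this
      refine ⟨cc, ?_⟩
      rw [this]
      exact Finset.sum_congr rfl fun k _ => by rw [hbx, restFst_pairE]
    · intro k l
      rw [hbxgram]
      rcases eq_or_ne k l with h | h
      · rw [if_pos h, if_pos h]
        have : ((k : ℕ) = m) ↔ ((k : ℕ) = m + 1 - 1) := by omega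
        by_cases hm : (k : ℕ) = m
        · rw [if_pos hm, if_pos (by omega)]
        · rw [if_neg hm, if_neg (by omega)]
      · rw [if_neg h, if_neg h]
  · -- L diagonal → orthonormal basis of U
    rintro ⟨b, hbL, _hbli, hbgen, hbgram⟩
    set p : Fin (m+1) := Fin.last m with hp
    have hgram' : ∀ i, ⟪b p, b i⟫ = if p = i then 2 else 0 := by
      intro i
      rw [hbgram]
      rcases eq_or_ne p i with h | h
      · rw [if_pos h, if_pos h, hp]
        simp
      · rw [if_neg h, if_neg h]
    have hgramsym : ∀ i, ⟪b i, b p⟫ = if p = i then 2 else 0 := fun i => by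
      rw [real_inner_comm]; exact hgram' i
    set half : EuclideanSpace ℝ (Fin (m+1)) := (2⁻¹ : ℝ) • b p with hhalf
    have hhalfpair : ∀ v ∈ L, ∃ k : ℤ, ⟪half, v⟫ = (k : ℝ) := by
      intro v hv
      obtain ⟨c, rfl⟩ := hbgen v hv
      refine ⟨c p, ?_⟩
      rw [real_inner_smul_left, inner_sum]
      simp only [real_inner_smul_right, hgram', mul_ite, mul_zero, mul_comm]
      rw [Finset.sum_ite_eq]
      simp
      ring
    have hhalfdual : half ∈ dualSet L := hhalfpair
    have hhalfnot : half ∉ L := by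
      intro hmem
      obtain ⟨c, hc⟩ := hbgen half hmem
      have h1 : ⟪b p, half⟫ = 1 := by
        rw [hhalf, real_inner_smul_right, hgram']
        simp
      rw [hc, inner_sum] at h1
      simp only [real_inner_smul_right, hgram', mul_ite, mul_zero] at h1
      rw [Finset.sum_ite_eq] at h1
      simp at h1
      have : c p * 2 = (1 : ℤ) := by exact_mod_cast h1
      omega
    have hhalfmem : half ∈ dualSet L \ L := ⟨hhalfdual, hhalfnot⟩
    -- the orthonormal basis of U
    set u : Fin (m+1+1) → EuclideanSpace ℝ (Fin (m+1+1)) :=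
      Fin.snoc (Fin.snoc (fun k : Fin m => pairE (b (Fin.castSucc k)) 0)
        (pairE half ((2⁻¹:ℝ) • r))) (pairE half (-((2⁻¹:ℝ) • r))) with hu
    have hu_cast2 : ∀ k : Fin m,
        u (Fin.castSucc (Fin.castSucc k)) = pairE (b (Fin.castSucc k)) 0 := by
      intro k; rw [hu, Fin.snoc_castSucc, Fin.snoc_castSucc]
    have hu_mid : u (Fin.castSucc (Fin.last m)) = pairE half ((2⁻¹:ℝ) • r) := by
      rw [hu, Fin.snoc_castSucc, Fin.snoc_last]
    have hu_last : u (Fin.last (m+1)) = pairE half (-((2⁻¹:ℝ) • r)) := by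
      rw [hu, Fin.snoc_last]
    have hhh : ⟪half, half⟫ = 2⁻¹ := by
      rw [hhalf, real_inner_smul_left, real_inner_smul_right, hgram']
      norm_num
    have hrr : ⟪(2⁻¹:ℝ) • r, (2⁻¹:ℝ) • r⟫ = (2⁻¹ : ℝ) := by
      rw [real_inner_smul_left, real_inner_smul_right, hr]; norm_num
    have hugram : ∀ i j, ⟪u i, u j⟫ = if i = j then (1:ℝ) else 0 := by
      intro i j
      induction i using Fin.lastCases with
      | last =>
          induction j using Fin.lastCases with
          | last =>
              rw [hu_last, if_pos rfl, pairE_inner, hhh, inner_neg_neg, hrr]; norm_num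
          | cast k =>
              induction k using Fin.lastCases with
              | last =>
                  rw [hu_last, hu_mid, pairE_inner, hhh, inner_neg_left, hrr,
                    if_neg (by simp [Fin.ext_iff])]
                  norm_num
              | cast k' =>
                  rw [hu_last, hu_cast2, pairE_inner, hhalf, real_inner_smul_left,
                    hgram', if_neg (by have := k'.isLt; simp [hp, Fin.ext_iff]; omega),
                    if_neg (by have := k'.isLt; simp [hp, Fin.ext_iff]; omega)]
                  simp
      | cast k =>
          induction k using Fin.lastCases with
          | last =>
              induction j using Fin.lastCases with
              | last =>
                  rw [hu_last, hu_mid, pairE_inner, hhh, inner_neg_right, hrr,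
                    if_neg (by simp [Fin.ext_iff])]
                  norm_num
              | cast l =>
                  induction l using Fin.lastCases with
                  | last => rw [hu_mid, if_pos rfl, pairE_inner, hhh, hrr]; norm_num
                  | cast l' =>
                      rw [hu_mid, hu_cast2, pairE_inner, hhalf, real_inner_smul_left,
                        hgram', if_neg (by have := l'.isLt; simp [hp, Fin.ext_iff]; omega),
                        if_neg (by have := l'.isLt; simp [hp, Fin.ext_iff]; omega)]
                      simp
          | cast k' =>
              induction j using Fin.lastCases with
              | last =>
                  rw [hu_last, hu_cast2, pairE_inner, hhalf, real_inner_smul_right,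
                    hgramsym, if_neg (by have := k'.isLt; simp [hp, Fin.ext_iff]; omega),
                    if_neg (by have := k'.isLt; simp [hp, Fin.ext_iff]; omega)]
                  simp
              | cast l =>
                  induction l using Fin.lastCases with
                  | last =>
                      rw [hu_mid, hu_cast2, pairE_inner, hhalf, real_inner_smul_right,
                        hgramsym, if_neg (by have := k'.isLt; simp [hp, Fin.ext_iff]; omega),
                        if_neg (by have := k'.isLt; simp [hp, Fin.ext_iff]; omega)]
                      simp
                  | cast l' =>
                      rw [hu_cast2, hu_cast2, pairE_inner, hbgram, inner_zero_left,
                        add_zero]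
                      by_cases h : k' = l'
                      · subst h
                        rw [if_pos rfl, if_pos rfl,
                          if_neg (by have := k'.isLt; simp [hp, Fin.ext_iff]; omega)]
                      · have hvv : (k' : ℕ) ≠ (l' : ℕ) := by
                          simpa [Fin.ext_iff] using h
                        rw [if_neg (by simp [Fin.ext_iff]; exact hvv),
                          if_neg (by simp [Fin.ext_iff]; exact hvv)]
    have hUmem : ∀ i, u i ∈ overLattice L A₁ := by
      intro i
      induction i using Fin.lastCases with
      | last =>
          rw [hu_last]
          exact Or.inr ⟨half, hhalfmem, _,
            (mem_diff_A₁_iff r hr A₁ hA₁ _).2 ⟨-1, by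
              rw [inner_neg_left, real_inner_smul_left, hr]; push_cast; ring⟩, rfl⟩
      | cast k =>
          induction k using Fin.lastCases with
          | last =>
              rw [hu_mid]
              exact Or.inr ⟨half, hhalfmem, _,
                (mem_diff_A₁_iff r hr A₁ hA₁ _).2 ⟨0, by
                  rw [real_inner_smul_left, hr]; push_cast; ring⟩, rfl⟩
          | cast k' =>
              rw [hu_cast2]
              exact Or.inl ⟨b (Fin.castSucc k'), hbL _, 0, hzeroA, rfl⟩
    have hdiffL : ∀ x ∈ dualSet L \ L, x - half ∈ L := fun x hx =>
      diff_mem_L hgrp w₀ hw₀ hidx hx hhalfmem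
    refine ⟨u, hUmem, li_of_gram u (fun _ => 1) (fun _ => one_ne_zero) hugram, ?_, hugram⟩
    intro z hz
    have hcoef : ∀ i, ∃ k : ℤ, ⟪u i, z⟫ = (k : ℝ) := by
      intro i
      rcases hz with ⟨x, hx, y, hy, rfl⟩ | ⟨x, hx, y, hy, rfl⟩
      · obtain ⟨ky, hky⟩ := (mem_A₁_iff r hr A₁ hA₁ y).1 hy
        induction i using Fin.lastCases with
        | last =>
            obtain ⟨k₁, hk₁⟩ := hhalfpair x hx
            refine ⟨k₁ - ky, ?_⟩
            rw [hu_last, pairE_inner, hk₁, inner_neg_left, real_inner_smul_left,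
              real_inner_comm, hky]
            push_cast; ring
        | cast k =>
            induction k using Fin.lastCases with
            | last =>
                obtain ⟨k₁, hk₁⟩ := hhalfpair x hx
                refine ⟨k₁ + ky, ?_⟩
                rw [hu_mid, pairE_inner, hk₁, real_inner_smul_left,
                  real_inner_comm, hky]
                push_cast; ring
            | cast k' =>
                obtain ⟨k₁, hk₁⟩ := hint _ (hbL (Fin.castSucc k')) x hx
                refine ⟨k₁, ?_⟩
                rw [hu_cast2, pairE_inner, hk₁, inner_zero_left, add_zero]
      · obtain ⟨ky, hky⟩ := (mem_diff_A₁_iff r hr A₁ hA₁ y).1 hy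
        have hxl : x - half ∈ L := hdiffL x hx
        obtain ⟨k₂, hk₂⟩ := hhalfpair _ hxl
        have hhx : ⟪half, x⟫ = (k₂ : ℝ) + 2⁻¹ := by
          have : ⟪half, x⟫ = ⟪half, x - half⟫ + ⟪half, half⟫ := by
            rw [← inner_add_right]; simp
          rw [this, hk₂, hhh]
        induction i using Fin.lastCases with
        | last =>
            refine ⟨k₂ - ky, ?_⟩
            rw [hu_last, pairE_inner, hhx, inner_neg_left, real_inner_smul_left,
              real_inner_comm, hky]
            push_cast; ring
        | cast k =>
            induction k using Fin.lastCases with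
            | last =>
                refine ⟨k₂ + ky + 1, ?_⟩
                rw [hu_mid, pairE_inner, hhx, real_inner_smul_left,
                  real_inner_comm, hky]
                push_cast; ring
            | cast k' =>
                obtain ⟨k₁, hk₁⟩ := hx.1 _ (hbL (Fin.castSucc k'))
                refine ⟨k₁, ?_⟩
                rw [hu_cast2, pairE_inner, real_inner_comm, hk₁, inner_zero_left,
                  add_zero]
    choose cc hcc using hcoef
    refine ⟨cc, ?_⟩
    conv_lhs => rw [ortho_expand u hugram z]
    exact Finset.sum_congr rfl fun i _ => by rw [hcc]

end
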